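/- Let Φ₁: G₁ → K and Φ₂: G₂ → K be synchronizing right-resolvers between finite graphs, let P = G₁ ×_{Φ₁,Φ₂} G₂, and let C be a principal subgraph of P such that the restricted state maps ∂Φ̂_i|_{V(C)}: V(C) → V(G_i) are surjective. Then the restrictions Φ̂_i|_C: C → G_i are synchronizing right-resolvers, so C is a common synchronizing extension of G₁ and G₂. -/

import Mathlib

/-- A finite directed multigraph. -/
structure FinGraph where
  V : Type
  E : Type
  [fintV : Fintype V]
  [fintE : Fintype E]
  [decV : DecidableEq V]
  [decE : DecidableEq E]
  src : E → V
  tgt : E → V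

attribute [instance] FinGraph.fintV FinGraph.fintE FinGraph.decV FinGraph.decE

/-- A graph homomorphism. -/
structure GHom (G H : FinGraph) where
  eMap : G.E → H.E
  vMap : G.V → H.V
  src_eq : ∀ e, H.src (eMap e) = vMap (G.src e)
  tgt_eq : ∀ e, H.tgt (eMap e) = vMap (G.tgt e)

def GHom.comp {G K H : FinGraph} (Δ : GHom K H) (Ψ : GHom G K) : GHom G H where
  eMap := Δ.eMap ∘ Ψ.eMap
  vMap := Δ.vMap ∘ Ψ.vMap
  src_eq := fun e => by
    simp only [Function.comp_apply, Δ.src_eq, Ψ.src_eq]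
  tgt_eq := fun e => by
    simp only [Function.comp_apply, Δ.tgt_eq, Ψ.tgt_eq]

/-- The restriction of a homomorphism to the outgoing edges of a state. -/
def outMap {G H : FinGraph} (Φ : GHom G H) (I : G.V) :
    {e : G.E // G.src e = I} → {f : H.E // H.src f = Φ.vMap I} :=
  fun e => ⟨Φ.eMap e.1, (Φ.src_eq e.1).trans (congrArg Φ.vMap e.2)⟩

/-- A right-resolver: a surjective homomorphism restricting to a bijection
on the outgoing edges of each state. -/
def IsRR {G H : FinGraph} (Φ : GHom G H) : Prop :=
  Function.Surjective Φ.vMap ∧ ∀ I : G.V, Function.Bijective (outMap Φ I)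

/-- `IsPathFrom H I u`: the edge list `u` is a path in `H` starting at `I`. -/
def IsPathFrom (H : FinGraph) : H.V → List H.E → Prop
  | _, [] => True
  | I, e :: u => H.src e = I ∧ IsPathFrom H (H.tgt e) u

/-- The terminal state of a path starting at `I`. -/
def pathEnd (H : FinGraph) (I : H.V) (u : List H.E) : H.V :=
  u.foldl (fun _ e => H.tgt e) I

/-- One-step transition: `I · a` is the target of the unique edge at `I`
lifting `a` (when `Φ` is right-resolving and `a` starts at the image of `I`). -/
noncomputable def step {G H : FinGraph} (Φ : GHom G H) (I : G.V) (a : H.E) : G.V :=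
  if h : ∃ e : G.E, G.src e = I ∧ Φ.eMap e = a then G.tgt h.choose else I

/-- Transition along a word: `I · u`. -/
noncomputable def transPath {G H : FinGraph} (Φ : GHom G H) (I : G.V) (u : List H.E) : G.V :=
  u.foldl (step Φ) I

/-- The stability relation of a right-resolver. -/
def Stable {G H : FinGraph} (Φ : GHom G H) (I₁ I₂ : G.V) : Prop :=
  Φ.vMap I₁ = Φ.vMap I₂ ∧
  ∀ u : List H.E, IsPathFrom H (Φ.vMap I₁) u →
    ∃ v : List H.E, IsPathFrom H (pathEnd H (Φ.vMap I₁) u) v ∧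
      transPath Φ I₁ (u ++ v) = transPath Φ I₂ (u ++ v)

/-- A right-resolver is synchronizing if each fiber of its state map is a
single stability class. -/
def Synchronizing {G H : FinGraph} (Φ : GHom G H) : Prop :=
  ∀ I₁ I₂ : G.V, Φ.vMap I₁ = Φ.vMap I₂ → Stable Φ I₁ I₂

/-- The fiber of the state map over a state of the codomain. -/
def fiber {G H : FinGraph} (Φ : GHom G H) (I : H.V) : Set G.V := {J | Φ.vMap J = I}

/-- The image `U · u` of a set of states under transition along a word. -/
noncomputable def setTrans {G H : FinGraph} (Φ : GHom G H) (U : Set G.V)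
    (u : List H.E) : Set G.V :=
  (fun J => transPath Φ J u) '' U

/-- A minimal image of a right-resolver. -/
def IsMinImage {G H : FinGraph} (Φ : GHom G H) (U : Set G.V) : Prop :=
  ∃ (I : H.V) (u : List H.E), IsPathFrom H I u ∧ U = setTrans Φ (fiber Φ I) u ∧
    ∀ v : List H.E, IsPathFrom H (pathEnd H I u) v →
      (setTrans Φ U v).ncard = U.ncard

/-- Strong connectedness: a directed path between every ordered pair of states. -/
def StronglyConnected (G : FinGraph) : Prop :=
  ∀ I J : G.V, ∃ u : List G.E, IsPathFrom G I u ∧ pathEnd G I u = J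

/-- The fiber product of two homomorphisms into a common codomain. -/
def fiberProd {H₁ H₂ K : FinGraph} (Ψ₁ : GHom H₁ K) (Ψ₂ : GHom H₂ K) : FinGraph where
  V := {p : H₁.V × H₂.V // Ψ₁.vMap p.1 = Ψ₂.vMap p.2}
  E := {q : H₁.E × H₂.E // Ψ₁.eMap q.1 = Ψ₂.eMap q.2}
  src := fun q => ⟨(H₁.src q.1.1, H₂.src q.1.2), by
    rw [← Ψ₁.src_eq, ← Ψ₂.src_eq, q.2]⟩
  tgt := fun q => ⟨(H₁.tgt q.1.1, H₂.tgt q.1.2), by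
    rw [← Ψ₁.tgt_eq, ← Ψ₂.tgt_eq, q.2]⟩

/-- First coordinate projection of the fiber product. -/
def fpProj₁ {H₁ H₂ K : FinGraph} (Ψ₁ : GHom H₁ K) (Ψ₂ : GHom H₂ K) :
    GHom (fiberProd Ψ₁ Ψ₂) H₁ where
  eMap := fun q => q.1.1
  vMap := fun p => p.1.1
  src_eq := fun _ => rfl
  tgt_eq := fun _ => rfl

/-- Second coordinate projection of the fiber product. -/
def fpProj₂ {H₁ H₂ K : FinGraph} (Ψ₁ : GHom H₁ K) (Ψ₂ : GHom H₂ K) :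
    GHom (fiberProd Ψ₁ Ψ₂) H₂ where
  eMap := fun q => q.1.2
  vMap := fun p => p.1.2
  src_eq := fun _ => rfl
  tgt_eq := fun _ => rfl

/-- The principal subgraph of P induced by a follower-closed set S of states. -/
noncomputable def restrict (P : FinGraph) (S : Set P.V)
    (hS : ∀ e : P.E, P.src e ∈ S → P.tgt e ∈ S) : FinGraph where
  V := S
  E := {e : P.E // P.src e ∈ S}
  fintV := (Set.toFinite S).fintype
  fintE := (Set.toFinite {e : P.E | P.src e ∈ S}).fintype
  decV := Classical.decEq _
  decE := Classical.decEq _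
  src := fun e => ⟨P.src e.1, e.2⟩
  tgt := fun e => ⟨P.tgt e.1, hS e.1 e.2⟩

/-- The inclusion of a principal subgraph. -/
noncomputable def inclHom (P : FinGraph) (S : Set P.V)
    (hS : ∀ e : P.E, P.src e ∈ S → P.tgt e ∈ S) : GHom (restrict P S hS) P where
  eMap := fun e => e.1
  vMap := fun v => v.1
  src_eq := fun _ => rfl
  tgt_eq := fun _ => rfl

section AuxLemmas

variable {G H : FinGraph} (Φ : GHom G H)

lemma transPath_append' (I : G.V) (u v : List H.E) :
    transPath Φ I (u ++ v) = transPath Φ (transPath Φ I u) v :=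
  List.foldl_append

lemma step_eq_of_edge (hinj : ∀ I, Function.Injective (outMap Φ I))
    {I : G.V} {e : G.E} (he : G.src e = I) :
    step Φ I (Φ.eMap e) = G.tgt e := by
  have hex : ∃ e' : G.E, G.src e' = I ∧ Φ.eMap e' = Φ.eMap e := ⟨e, he, rfl⟩
  have h1 := hex.choose_spec
  have h2 : (⟨hex.choose, h1.1⟩ : {f : G.E // G.src f = I}) = ⟨e, he⟩ :=
    hinj I (Subtype.ext h1.2)
  unfold step
  rw [dif_pos hex]
  exact congrArg G.tgt (congrArg Subtype.val h2)

lemma step_spec (hsurj : ∀ I, Function.Surjective (outMap Φ I))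
    {I : G.V} {a : H.E} (ha : H.src a = Φ.vMap I) :
    ∃ e : G.E, G.src e = I ∧ Φ.eMap e = a ∧ step Φ I a = G.tgt e := by
  have hex : ∃ e' : G.E, G.src e' = I ∧ Φ.eMap e' = a := by
    obtain ⟨⟨e, hse⟩, he⟩ := hsurj I ⟨a, ha⟩
    exact ⟨e, hse, congrArg Subtype.val he⟩
  exact ⟨hex.choose, hex.choose_spec.1, hex.choose_spec.2, by
    unfold step; rw [dif_pos hex]⟩

lemma isPathFrom_map {I : G.V} {u : List G.E} (h : IsPathFrom G I u) :
    IsPathFrom H (Φ.vMap I) (u.map Φ.eMap) := by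
  induction u generalizing I with
  | nil => trivial
  | cons e u ih =>
    refine ⟨(Φ.src_eq e).trans (congrArg Φ.vMap h.1), ?_⟩
    have := ih h.2
    rwa [Φ.tgt_eq]

lemma pathEnd_map (I : G.V) (u : List G.E) :
    pathEnd H (Φ.vMap I) (u.map Φ.eMap) = Φ.vMap (pathEnd G I u) := by
  induction u generalizing I with
  | nil => rfl
  | cons e u ih =>
    show pathEnd H (H.tgt (Φ.eMap e)) (u.map Φ.eMap) = _
    rw [Φ.tgt_eq]
    exact ih (G.tgt e)

lemma isPathFrom_append {I : G.V} {u v : List G.E}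
    (hu : IsPathFrom G I u) (hv : IsPathFrom G (pathEnd G I u) v) :
    IsPathFrom G I (u ++ v) := by
  induction u generalizing I with
  | nil => exact hv
  | cons e u ih => exact ⟨hu.1, ih hu.2 hv⟩

lemma transPath_vMap (hsurj : ∀ I, Function.Surjective (outMap Φ I))
    {I : G.V} {u : List H.E} (hu : IsPathFrom H (Φ.vMap I) u) :
    Φ.vMap (transPath Φ I u) = pathEnd H (Φ.vMap I) u := by
  induction u generalizing I with
  | nil => rfl
  | cons a u ih =>
    obtain ⟨e, hse, hΦe, hstep⟩ := step_spec Φ hsurj hu.1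
    have hv : Φ.vMap (step Φ I a) = H.tgt a := by
      rw [hstep, ← Φ.tgt_eq, hΦe]
    show Φ.vMap (transPath Φ (step Φ I a) u) = pathEnd H (H.tgt a) u
    rw [ih (I := step Φ I a) (by rw [hv]; exact hu.2), hv]

lemma lift_path (hsurj : ∀ I, Function.Surjective (outMap Φ I))
    {I : G.V} {w : List H.E} (hw : IsPathFrom H (Φ.vMap I) w) :
    ∃ v : List G.E, IsPathFrom G I v ∧ v.map Φ.eMap = w := by
  induction w generalizing I with
  | nil => exact ⟨[], trivial, rfl⟩
  | cons a w ih =>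
    obtain ⟨e, hse, hΦe, -⟩ := step_spec Φ hsurj hw.1
    obtain ⟨v, hv, hmap⟩ := ih (I := G.tgt e) (by
      have : Φ.vMap (G.tgt e) = H.tgt a := by rw [← Φ.tgt_eq, hΦe]
      rw [this]; exact hw.2)
    exact ⟨e :: v, ⟨hse, hv⟩, by simp [hmap, hΦe]⟩

end AuxLemmas
section SyncAbstract

variable {C G₁ G₂ K : FinGraph} (π : GHom C G₁) (θ : GHom C G₂)
  (Φ₁ : GHom G₁ K) (Φ₂ : GHom G₂ K)

lemma theta_transPath
    (hcomm_e : ∀ eh, Φ₂.eMap (θ.eMap eh) = Φ₁.eMap (π.eMap eh))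
    (hπ : ∀ p, Function.Surjective (outMap π p))
    (hΦ₂inj : ∀ I, Function.Injective (outMap Φ₂ I))
    (p : C.V) (u : List G₁.E) (hu : IsPathFrom G₁ (π.vMap p) u) :
    θ.vMap (transPath π p u) = transPath Φ₂ (θ.vMap p) (u.map Φ₁.eMap) := by
  induction u generalizing p with
  | nil => rfl
  | cons a u ih =>
    obtain ⟨eh, hsrc, hmap, hstep⟩ := step_spec π hπ hu.1
    have hθstep : θ.vMap (step π p a) = step Φ₂ (θ.vMap p) (Φ₁.eMap a) := by
      have h1 : G₂.src (θ.eMap eh) = θ.vMap p := by rw [θ.src_eq, hsrc]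
      have h2 := step_eq_of_edge Φ₂ hΦ₂inj h1
      rw [hstep, ← θ.tgt_eq, ← h2, hcomm_e, hmap]
    have hπstep : π.vMap (step π p a) = G₁.tgt a := by
      rw [hstep, ← π.tgt_eq, hmap]
    show θ.vMap (transPath π (step π p a) u)
        = transPath Φ₂ (step Φ₂ (θ.vMap p) (Φ₁.eMap a)) (u.map Φ₁.eMap)
    rw [← hθstep]
    exact ih (step π p a) (by rw [hπstep]; exact hu.2)

lemma sync_abstract
    (hcomm_e : ∀ eh, Φ₂.eMap (θ.eMap eh) = Φ₁.eMap (π.eMap eh))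
    (hcomm_v : ∀ p, Φ₂.vMap (θ.vMap p) = Φ₁.vMap (π.vMap p))
    (hsep : ∀ p q : C.V, π.vMap p = π.vMap q → θ.vMap p = θ.vMap q → p = q)
    (hπ : ∀ p, Function.Surjective (outMap π p))
    (hΦ₁surj : ∀ I, Function.Surjective (outMap Φ₁ I))
    (hΦ₂inj : ∀ I, Function.Injective (outMap Φ₂ I))
    (hΦ₂surj : ∀ I, Function.Surjective (outMap Φ₂ I))
    (hs₂ : Synchronizing Φ₂) :
    Synchronizing π := by
  intro p q hpq
  refine ⟨hpq, fun u hu => ?_⟩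
  have huq : IsPathFrom G₁ (π.vMap q) u := hpq ▸ hu
  set J₂ := θ.vMap (transPath π p u) with hJ₂def
  set J₂' := θ.vMap (transPath π q u) with hJ₂'def
  have hJ₂ : J₂ = transPath Φ₂ (θ.vMap p) (u.map Φ₁.eMap) :=
    theta_transPath π θ Φ₁ Φ₂ hcomm_e hπ hΦ₂inj p u hu
  have hJ₂' : J₂' = transPath Φ₂ (θ.vMap q) (u.map Φ₁.eMap) :=
    theta_transPath π θ Φ₁ Φ₂ hcomm_e hπ hΦ₂inj q u huq
  have hKpath : IsPathFrom K (Φ₂.vMap (θ.vMap p)) (u.map Φ₁.eMap) := by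
    rw [hcomm_v]; exact isPathFrom_map Φ₁ hu
  have hKpath' : IsPathFrom K (Φ₂.vMap (θ.vMap q)) (u.map Φ₁.eMap) := by
    rw [hcomm_v]; exact isPathFrom_map Φ₁ huq
  have hbase : Φ₂.vMap (θ.vMap p) = Φ₂.vMap (θ.vMap q) := by
    rw [hcomm_v, hcomm_v, hpq]
  have hJJ : Φ₂.vMap J₂ = Φ₂.vMap J₂' := by
    rw [hJ₂, hJ₂', transPath_vMap Φ₂ hΦ₂surj hKpath,
      transPath_vMap Φ₂ hΦ₂surj hKpath', hbase]
  obtain ⟨w, hw, heq⟩ := (hs₂ J₂ J₂' hJJ).2 [] trivial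
  have hJv : Φ₂.vMap J₂ = Φ₁.vMap (pathEnd G₁ (π.vMap p) u) := by
    rw [hJ₂def, hcomm_v, transPath_vMap π hπ hu]
  have hw' : IsPathFrom K (Φ₁.vMap (pathEnd G₁ (π.vMap p) u)) w := by
    rw [← hJv]; exact hw
  obtain ⟨v, hv, hvmap⟩ := lift_path Φ₁ hΦ₁surj hw'
  have huv : IsPathFrom G₁ (π.vMap p) (u ++ v) := isPathFrom_append hu hv
  have huvq : IsPathFrom G₁ (π.vMap q) (u ++ v) := hpq ▸ huv
  refine ⟨v, hv, hsep _ _ ?_ ?_⟩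
  · rw [transPath_vMap π hπ huv, transPath_vMap π hπ huvq, hpq]
  · rw [theta_transPath π θ Φ₁ Φ₂ hcomm_e hπ hΦ₂inj p (u ++ v) huv,
      theta_transPath π θ Φ₁ Φ₂ hcomm_e hπ hΦ₂inj q (u ++ v) huvq,
      List.map_append, transPath_append', transPath_append',
      ← hJ₂, ← hJ₂', hvmap]
    simpa using heq

end SyncAbstract
section Concrete

variable {G₁ G₂ K : FinGraph} (Φ₁ : GHom G₁ K) (Φ₂ : GHom G₂ K)
  (S : Set (fiberProd Φ₁ Φ₂).V)
  (hS : ∀ e : (fiberProd Φ₁ Φ₂).E,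
      (fiberProd Φ₁ Φ₂).src e ∈ S → (fiberProd Φ₁ Φ₂).tgt e ∈ S)

lemma outMap1_bij (h₂ : ∀ I, Function.Bijective (outMap Φ₂ I))
    (p : (restrict (fiberProd Φ₁ Φ₂) S hS).V) :
    Function.Bijective
      (outMap ((fpProj₁ Φ₁ Φ₂).comp (inclHom (fiberProd Φ₁ Φ₂) S hS)) p) := by
  constructor
  · rintro ⟨eh, hsrc⟩ ⟨eh', hsrc'⟩ h
    have h1 : eh.1.1.1 = eh'.1.1.1 := congrArg Subtype.val h
    have hs1 : (G₁.src eh.1.1.1, G₂.src eh.1.1.2) = p.1.1 :=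
      congrArg Subtype.val (congrArg Subtype.val hsrc)
    have hs1' : (G₁.src eh'.1.1.1, G₂.src eh'.1.1.2) = p.1.1 :=
      congrArg Subtype.val (congrArg Subtype.val hsrc')
    have hb : G₂.src eh.1.1.2 = p.1.1.2 := congrArg Prod.snd hs1
    have hb' : G₂.src eh'.1.1.2 = p.1.1.2 := congrArg Prod.snd hs1'
    have hΦ : Φ₂.eMap eh.1.1.2 = Φ₂.eMap eh'.1.1.2 := by
      rw [← eh.1.2, ← eh'.1.2, h1]
    have h2 : eh.1.1.2 = eh'.1.1.2 := by
      have := (h₂ p.1.1.2).1 (a₁ := ⟨eh.1.1.2, hb⟩) (a₂ := ⟨eh'.1.1.2, hb'⟩)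
        (Subtype.ext hΦ)
      exact congrArg Subtype.val this
    exact Subtype.ext (Subtype.ext (Subtype.ext (Prod.ext h1 h2)))
  · rintro ⟨a, ha⟩
    have ha2 : G₁.src a = p.1.1.1 := ha
    have ha' : K.src (Φ₁.eMap a) = Φ₂.vMap p.1.1.2 := by
      rw [Φ₁.src_eq, ha2]; exact p.1.2
    obtain ⟨⟨b, hb⟩, hbmap⟩ := (h₂ p.1.1.2).2 ⟨Φ₁.eMap a, ha'⟩
    have hΦb : Φ₂.eMap b = Φ₁.eMap a := congrArg Subtype.val hbmap
    have hsrcP : (fiberProd Φ₁ Φ₂).src ⟨(a, b), hΦb.symm⟩ = p.1 :=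
      Subtype.ext (Prod.ext ha2 hb)
    have hmem : (fiberProd Φ₁ Φ₂).src ⟨(a, b), hΦb.symm⟩ ∈ S := by
      rw [hsrcP]; exact p.2
    exact ⟨⟨⟨⟨(a, b), hΦb.symm⟩, hmem⟩, Subtype.ext hsrcP⟩, Subtype.ext rfl⟩

lemma outMap2_bij (h₁ : ∀ I, Function.Bijective (outMap Φ₁ I))
    (p : (restrict (fiberProd Φ₁ Φ₂) S hS).V) :
    Function.Bijective
      (outMap ((fpProj₂ Φ₁ Φ₂).comp (inclHom (fiberProd Φ₁ Φ₂) S hS)) p) := by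
  constructor
  · rintro ⟨eh, hsrc⟩ ⟨eh', hsrc'⟩ h
    have h2 : eh.1.1.2 = eh'.1.1.2 := congrArg Subtype.val h
    have hs1 : (G₁.src eh.1.1.1, G₂.src eh.1.1.2) = p.1.1 :=
      congrArg Subtype.val (congrArg Subtype.val hsrc)
    have hs1' : (G₁.src eh'.1.1.1, G₂.src eh'.1.1.2) = p.1.1 :=
      congrArg Subtype.val (congrArg Subtype.val hsrc')
    have hb : G₁.src eh.1.1.1 = p.1.1.1 := congrArg Prod.fst hs1
    have hb' : G₁.src eh'.1.1.1 = p.1.1.1 := congrArg Prod.fst hs1'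
    have hΦ : Φ₁.eMap eh.1.1.1 = Φ₁.eMap eh'.1.1.1 := by
      rw [eh.1.2, eh'.1.2, h2]
    have h1 : eh.1.1.1 = eh'.1.1.1 := by
      have := (h₁ p.1.1.1).1 (a₁ := ⟨eh.1.1.1, hb⟩) (a₂ := ⟨eh'.1.1.1, hb'⟩)
        (Subtype.ext hΦ)
      exact congrArg Subtype.val this
    exact Subtype.ext (Subtype.ext (Subtype.ext (Prod.ext h1 h2)))
  · rintro ⟨a, ha⟩
    have ha2 : G₂.src a = p.1.1.2 := ha
    have ha' : K.src (Φ₂.eMap a) = Φ₁.vMap p.1.1.1 := by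
      rw [Φ₂.src_eq, ha2]; exact p.1.2.symm
    obtain ⟨⟨b, hb⟩, hbmap⟩ := (h₁ p.1.1.1).2 ⟨Φ₂.eMap a, ha'⟩
    have hΦb : Φ₁.eMap b = Φ₂.eMap a := congrArg Subtype.val hbmap
    have hsrcP : (fiberProd Φ₁ Φ₂).src ⟨(b, a), hΦb⟩ = p.1 :=
      Subtype.ext (Prod.ext hb ha2)
    have hmem : (fiberProd Φ₁ Φ₂).src ⟨(b, a), hΦb⟩ ∈ S := by
      rw [hsrcP]; exact p.2
    exact ⟨⟨⟨⟨(b, a), hΦb⟩, hmem⟩, Subtype.ext hsrcP⟩, Subtype.ext rfl⟩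

end Concrete
/-- a principal subgraph of the fiber product of two
synchronizers, which projects onto the states of each factor, is a common
synchronizing extension via the restricted projections. -/
theorem fiberProd_principal_sync {G₁ G₂ K : FinGraph}
    (Φ₁ : GHom G₁ K) (Φ₂ : GHom G₂ K)
    (h₁ : IsRR Φ₁) (h₂ : IsRR Φ₂)
    (hs₁ : Synchronizing Φ₁) (hs₂ : Synchronizing Φ₂)
    (S : Set (fiberProd Φ₁ Φ₂).V)
    (hS : ∀ e : (fiberProd Φ₁ Φ₂).E,
      (fiberProd Φ₁ Φ₂).src e ∈ S → (fiberProd Φ₁ Φ₂).tgt e ∈ S)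
    (hsurj₁ : Function.Surjective
      (GHom.vMap ((fpProj₁ Φ₁ Φ₂).comp (inclHom (fiberProd Φ₁ Φ₂) S hS))))
    (hsurj₂ : Function.Surjective
      (GHom.vMap ((fpProj₂ Φ₁ Φ₂).comp (inclHom (fiberProd Φ₁ Φ₂) S hS)))) :
    (IsRR ((fpProj₁ Φ₁ Φ₂).comp (inclHom (fiberProd Φ₁ Φ₂) S hS)) ∧
      Synchronizing ((fpProj₁ Φ₁ Φ₂).comp (inclHom (fiberProd Φ₁ Φ₂) S hS))) ∧
    (IsRR ((fpProj₂ Φ₁ Φ₂).comp (inclHom (fiberProd Φ₁ Φ₂) S hS)) ∧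
      Synchronizing ((fpProj₂ Φ₁ Φ₂).comp (inclHom (fiberProd Φ₁ Φ₂) S hS))) := by
  have hb1 := fun p => outMap1_bij Φ₁ Φ₂ S hS h₂.2 p
  have hb2 := fun p => outMap2_bij Φ₁ Φ₂ S hS h₁.2 p
  refine ⟨⟨⟨hsurj₁, hb1⟩, ?_⟩, ⟨hsurj₂, hb2⟩, ?_⟩
  · exact sync_abstract ((fpProj₁ Φ₁ Φ₂).comp (inclHom (fiberProd Φ₁ Φ₂) S hS))
      ((fpProj₂ Φ₁ Φ₂).comp (inclHom (fiberProd Φ₁ Φ₂) S hS)) Φ₁ Φ₂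
      (fun eh => eh.1.2.symm) (fun p => p.1.2.symm)
      (fun p q hx hy => Subtype.ext (Subtype.ext (Prod.ext hx hy)))
      (fun p => (hb1 p).2) (fun I => (h₁.2 I).2)
      (fun I => (h₂.2 I).1) (fun I => (h₂.2 I).2) hs₂
  · exact sync_abstract ((fpProj₂ Φ₁ Φ₂).comp (inclHom (fiberProd Φ₁ Φ₂) S hS))
      ((fpProj₁ Φ₁ Φ₂).comp (inclHom (fiberProd Φ₁ Φ₂) S hS)) Φ₂ Φ₁
      (fun eh => eh.1.2) (fun p => p.1.2)
      (fun p q hx hy => Subtype.ext (Subtype.ext (Prod.ext hy hx)))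
      (fun p => (hb2 p).2) (fun I => (h₂.2 I).2)
      (fun I => (h₁.2 I).1) (fun I => (h₁.2 I).2) hs₁
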